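/- Let $\Gamma \geq \eta \geq 1$, let $k > k_{un} \geq 0$ and $\mu$ be integers with $\mu \geq k + \lceil (\Gamma-\eta+1)(k_{un}+1)/\Gamma \rceil$. Then $\eta(\mu-k) + (\Gamma-\eta)(\mu-k_{un}) \geq (k_{un}+1)(\Gamma-\eta+1)$. -/
import Mathlib


/-- Theorem 3 of the paper: if `Γ ≥ η ≥ 1`, `k > kun ≥ 0`, and
`μ ≥ k + ⌈(Γ-η+1)(kun+1)/Γ⌉`, then
`η(μ-k) + (Γ-η)(μ-kun) ≥ (kun+1)(Γ-η+1)`. -/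
theorem isi_beats_usi_case2 (Γ η k kun μ : ℕ) (hη : 1 ≤ η) (hΓ : η ≤ Γ)
    (hk : kun < k)
    (hμ : (μ : ℤ) ≥ (k : ℤ) + ⌈((((Γ : ℚ) - η + 1) * (kun + 1)) / Γ : ℚ)⌉) :
    (η : ℤ) * ((μ : ℤ) - k) + ((Γ : ℤ) - η) * ((μ : ℤ) - kun)
      ≥ ((kun : ℤ) + 1) * ((Γ : ℤ) - η + 1) := by
  set c : ℤ := ⌈((((Γ : ℚ) - η + 1) * (kun + 1)) / Γ : ℚ)⌉ with hc
  have hΓ1 : (1 : ℤ) ≤ Γ := by exact_mod_cast hη.trans hΓ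
  have hΓQ : (0 : ℚ) < (Γ : ℚ) := by exact_mod_cast hΓ1
  have hceil : (((Γ : ℚ) - η + 1) * (kun + 1)) / Γ ≤ (c : ℚ) := Int.le_ceil _
  have hmul : ((Γ : ℚ) - η + 1) * (kun + 1) ≤ (Γ : ℚ) * c := by
    rw [div_le_iff₀ hΓQ] at hceil
    linarith [hceil]
  have hmulZ : ((Γ : ℤ) - η + 1) * (kun + 1) ≤ (Γ : ℤ) * c := by exact_mod_cast hmul
  have hηZ : (1 : ℤ) ≤ η := by exact_mod_cast hη
  have hΓη : (η : ℤ) ≤ Γ := by exact_mod_cast hΓ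
  have hkZ : (kun : ℤ) < k := by exact_mod_cast hk
  nlinarith [hμ, hmulZ, mul_le_mul_of_nonneg_left hμ (by linarith : (0:ℤ) ≤ (η:ℤ))]
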